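/- For every integer m ≥ 1, −(1/12)·( −((4m+1)/m)·(1/(4m+1)² − 1/2) − m/(4m+1) + 3 + 12·𝐬(m,4m+1) ) = (2m² − 18m + 1)/(24m). -/

import Mathlib

open Classical in
/-- The sawtooth function `((x))`: `x - ⌊x⌋ - 1/2` if `x` is not an integer, `0` otherwise. -/
noncomputable def sawtooth (x : ℝ) : ℝ :=
  if ∃ n : ℤ, x = (n : ℝ) then 0 else x - ⌊x⌋ - 1 / 2

/-- The Dedekind sum `𝐬(q,p) = Σ_{i=1}^{p-1} ((i/p))·((iq/p))`. -/
noncomputable def dedekindSum (q p : ℤ) : ℝ :=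
  ∑ i ∈ Finset.Icc (1 : ℤ) (p - 1), sawtooth ((i : ℝ) / (p : ℝ)) * sawtooth ((i : ℝ) * (q : ℝ) / (p : ℝ))


lemma floor_int_div_nat (a : ℤ) (d : ℕ) : ⌊(a : ℝ) / (d : ℝ)⌋ = a / (d : ℤ) := by
  rw [← Rat.floor_intCast_div_natCast a d, ← Rat.floor_cast (α := ℝ), Rat.cast_div,
    Rat.cast_intCast, Rat.cast_natCast]

lemma saw_eq (a : ℤ) (d : ℕ) (hd : 0 < d) (hnd : ¬ ((d : ℤ) ∣ a)) :
    sawtooth ((a : ℝ) / (d : ℝ)) = ((a % (d : ℤ) : ℤ) : ℝ) / (d : ℝ) - 1 / 2 := by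
  have hd' : (d : ℝ) ≠ 0 := by positivity
  have hne : ¬ ∃ n : ℤ, (a : ℝ) / (d : ℝ) = (n : ℝ) := by
    rintro ⟨n, hn⟩
    apply hnd
    refine ⟨n, ?_⟩
    have h3 : (a : ℝ) = ((d * n : ℤ) : ℝ) := by
      push_cast; field_simp at hn; linarith
    exact_mod_cast h3
  rw [sawtooth, if_neg hne, floor_int_div_nat]
  have h2 : a % (d : ℤ) = a - (d : ℤ) * (a / (d : ℤ)) := Int.emod_def a d
  rw [h2]
  push_cast
  field_simp

lemma sum_shift (g : ℤ → ℝ) (N : ℕ) :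
    ∑ i ∈ Finset.Icc (1 : ℤ) (N : ℤ), g i = ∑ n ∈ Finset.range N, g ((n : ℤ) + 1) := by
  induction N with
  | zero => simp
  | succ N ih =>
    have h1 : ((N + 1 : ℕ) : ℤ) = (N : ℤ) + 1 := by push_cast; ring
    have h2 : Finset.Icc (1 : ℤ) ((N : ℤ) + 1) = insert ((N : ℤ) + 1) (Finset.Icc (1 : ℤ) (N : ℤ)) := by
      ext x; simp only [Finset.mem_Icc, Finset.mem_insert]; omega
    rw [h1, h2, Finset.sum_insert (by simp), ih, Finset.sum_range_succ]
    ring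

lemma sum_chunk4 (h : ℕ → ℝ) (M : ℕ) :
    ∑ n ∈ Finset.range (4 * M), h n
      = ∑ j ∈ Finset.range M, (h (4 * j) + h (4 * j + 1) + h (4 * j + 2) + h (4 * j + 3)) := by
  induction M with
  | zero => simp
  | succ M ih =>
    rw [show 4 * (M + 1) = 4 * M + 1 + 1 + 1 + 1 by ring, Finset.sum_range_succ,
      Finset.sum_range_succ, Finset.sum_range_succ, Finset.sum_range_succ, ih,
      Finset.sum_range_succ]
    ring

lemma sum_id (M : ℕ) : ∑ j ∈ Finset.range M, (j : ℝ) = M * (M - 1) / 2 := by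
  induction M with
  | zero => simp
  | succ M ih => rw [Finset.sum_range_succ, ih]; push_cast; ring

lemma sum_sq (M : ℕ) : ∑ j ∈ Finset.range M, (j : ℝ) ^ 2 = M * (M - 1) * (2 * M - 1) / 6 := by
  induction M with
  | zero => simp
  | succ M ih => rw [Finset.sum_range_succ, ih]; push_cast; ring

lemma floor_int_div (a d : ℤ) (hd : 0 < d) : ⌊(a : ℝ) / (d : ℝ)⌋ = a / d := by
  have h1 : ((d.toNat : ℕ) : ℝ) = (d : ℝ) := by
    exact_mod_cast congrArg (fun z : ℤ => (z : ℝ)) (Int.toNat_of_nonneg hd.le)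
  rw [← h1, floor_int_div_nat, Int.toNat_of_nonneg hd.le]

lemma saw_eq' (a d r : ℤ) (hd : 0 < d) (hr : 0 < r) (hrd : r < d) (hmod : a % d = r) :
    sawtooth ((a : ℝ) / (d : ℝ)) = (r : ℝ) / (d : ℝ) - 1 / 2 := by
  have hd' : (d : ℝ) ≠ 0 := by positivity
  have hnd : ¬ ((d : ℤ) ∣ a) := by
    intro hdvd
    rw [Int.emod_eq_zero_of_dvd hdvd] at hmod
    omega
  have hne : ¬ ∃ n : ℤ, (a : ℝ) / (d : ℝ) = (n : ℝ) := by
    rintro ⟨n, hn⟩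
    apply hnd
    refine ⟨n, ?_⟩
    have h3 : (a : ℝ) = ((d * n : ℤ) : ℝ) := by
      push_cast; field_simp at hn; linarith
    exact_mod_cast h3
  rw [sawtooth, if_neg hne, floor_int_div a d hd]
  have h2 : a % d = a - d * (a / d) := Int.emod_def a d
  rw [h2] at hmod
  have h4 : ((a / d : ℤ) : ℝ) = ((a : ℝ) - r) / (d : ℝ) := by
    have : (d : ℤ) * (a / d) = a - r := by omega
    have h5 : ((d : ℝ)) * ((a / d : ℤ) : ℝ) = (a : ℝ) - (r : ℝ) := by exact_mod_cast congrArg (fun z : ℤ => (z : ℝ)) this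
    field_simp
    linarith
  rw [h4]
  field_simp
  ring

lemma term_eq (M j k : ℕ) (i : ℤ) (hi : i = 4 * (j : ℤ) + (k : ℤ)) (hj : j < M)
    (hk1 : 1 ≤ k) (hk4 : k ≤ 4) :
    sawtooth ((i : ℝ) / ((4 * ((M : ℕ) : ℤ) + 1 : ℤ) : ℝ)) *
      sawtooth ((i : ℝ) * (((M : ℕ) : ℤ) : ℝ) / ((4 * ((M : ℕ) : ℤ) + 1 : ℤ) : ℝ))
      = ((4 * (j : ℝ) + (k : ℝ)) / (4 * (M : ℝ) + 1) - 1 / 2) *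
        (((k : ℝ) * (M : ℝ) - (j : ℝ)) / (4 * (M : ℝ) + 1) - 1 / 2) := by
  subst hi
  have hk1' : (1 : ℤ) ≤ (k : ℤ) := by exact_mod_cast hk1
  have hk4' : (k : ℤ) ≤ 4 := by exact_mod_cast hk4
  have hj' : (j : ℤ) < (M : ℤ) := by exact_mod_cast hj
  have hj0 : (0 : ℤ) ≤ (j : ℤ) := Int.ofNat_nonneg j
  have hd : (0 : ℤ) < 4 * (M : ℤ) + 1 := by positivity
  have h1 : sawtooth (((4 * (j : ℤ) + (k : ℤ) : ℤ) : ℝ) / ((4 * (M : ℤ) + 1 : ℤ) : ℝ))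
      = ((4 * (j : ℤ) + (k : ℤ) : ℤ) : ℝ) / ((4 * (M : ℤ) + 1 : ℤ) : ℝ) - 1 / 2 := by
    rw [saw_eq' _ _ (4 * (j : ℤ) + (k : ℤ)) hd (by omega) (by omega)
      (Int.emod_eq_of_lt (by omega) (by omega))]
  have hmod : ((4 * (j : ℤ) + (k : ℤ)) * (M : ℤ)) % (4 * (M : ℤ) + 1) = (k : ℤ) * M - j := by
    rw [show (4 * (j : ℤ) + (k : ℤ)) * (M : ℤ)
        = ((k : ℤ) * M - j) + (j : ℤ) * (4 * (M : ℤ) + 1) from by ring,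
      Int.add_mul_emod_self_right, Int.emod_eq_of_lt (by nlinarith) (by nlinarith)]
  have h2 : ((4 * (j : ℤ) + (k : ℤ) : ℤ) : ℝ) * (((M : ℕ) : ℤ) : ℝ)
      = (((4 * (j : ℤ) + (k : ℤ)) * (M : ℤ) : ℤ) : ℝ) := by push_cast; ring
  rw [h1, h2, saw_eq' _ _ ((k : ℤ) * M - j) hd (by nlinarith) (by nlinarith) hmod]
  push_cast
  ring

lemma prismInnerSum (M : ℕ) :
    ∑ j ∈ Finset.range M,
      (((4*(j:ℝ)+1)/(4*(M:ℝ)+1) - 1/2) * ((1*(M:ℝ) - (j:ℝ))/(4*(M:ℝ)+1) - 1/2)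
      + ((4*(j:ℝ)+2)/(4*(M:ℝ)+1) - 1/2) * ((2*(M:ℝ) - (j:ℝ))/(4*(M:ℝ)+1) - 1/2)
      + ((4*(j:ℝ)+3)/(4*(M:ℝ)+1) - 1/2) * ((3*(M:ℝ) - (j:ℝ))/(4*(M:ℝ)+1) - 1/2)
      + ((4*(j:ℝ)+4)/(4*(M:ℝ)+1) - 1/2) * ((4*(M:ℝ) - (j:ℝ))/(4*(M:ℝ)+1) - 1/2))
    = (44*(M:ℝ)^3 + 39*(M:ℝ)^2 + 7*(M:ℝ)) / (3*(4*(M:ℝ)+1)^2) - (M:ℝ) := by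
  have hP : (4*(M:ℝ)+1) ≠ 0 := by positivity
  have step : ∀ j ∈ Finset.range M,
      (((4*(j:ℝ)+1)/(4*(M:ℝ)+1) - 1/2) * ((1*(M:ℝ) - (j:ℝ))/(4*(M:ℝ)+1) - 1/2)
      + ((4*(j:ℝ)+2)/(4*(M:ℝ)+1) - 1/2) * ((2*(M:ℝ) - (j:ℝ))/(4*(M:ℝ)+1) - 1/2)
      + ((4*(j:ℝ)+3)/(4*(M:ℝ)+1) - 1/2) * ((3*(M:ℝ) - (j:ℝ))/(4*(M:ℝ)+1) - 1/2)
      + ((4*(j:ℝ)+4)/(4*(M:ℝ)+1) - 1/2) * ((4*(M:ℝ) - (j:ℝ))/(4*(M:ℝ)+1) - 1/2))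
      = (-16/(4*(M:ℝ)+1)^2) * (j:ℝ)^2
        + ((40*(M:ℝ)-10)/(4*(M:ℝ)+1)^2 - 6/(4*(M:ℝ)+1)) * (j:ℝ)
        + (30*(M:ℝ)/(4*(M:ℝ)+1)^2 - (5+5*(M:ℝ))/(4*(M:ℝ)+1) + 1) := by
    intro j _
    field_simp
    ring
  rw [Finset.sum_congr rfl step, Finset.sum_add_distrib, Finset.sum_add_distrib,
    ← Finset.mul_sum, ← Finset.mul_sum, Finset.sum_const, sum_sq, sum_id,
    Finset.card_range, nsmul_eq_mul]
  field_simp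
  ring

lemma ded_eq (M : ℕ) :
    dedekindSum (M : ℤ) (4 * (M : ℤ) + 1)
      = (44*(M:ℝ)^3 + 39*(M:ℝ)^2 + 7*(M:ℝ)) / (3*(4*(M:ℝ)+1)^2) - (M:ℝ) := by
  rw [dedekindSum, show (4 * ((M : ℕ) : ℤ) + 1) - 1 = ((4 * M : ℕ) : ℤ) from by push_cast; ring,
    sum_shift, sum_chunk4]
  refine Eq.trans (Finset.sum_congr rfl fun j hj => ?_) (prismInnerSum M)
  have hjM : j < M := Finset.mem_range.mp hj
  rw [term_eq M j 1 (((4*j : ℕ) : ℤ) + 1) (by push_cast; ring) hjM (by norm_num) (by norm_num),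
      term_eq M j 2 (((4*j+1 : ℕ) : ℤ) + 1) (by push_cast; ring) hjM (by norm_num) (by norm_num),
      term_eq M j 3 (((4*j+2 : ℕ) : ℤ) + 1) (by push_cast; ring) hjM (by norm_num) (by norm_num),
      term_eq M j 4 (((4*j+3 : ℕ) : ℤ) + 1) (by push_cast; ring) hjM (by norm_num) (by norm_num)]
  push_cast
  ring


/-- Lescop's formula for the Casson–Walker invariant `λ(−P(4m+1,m))`:
`−(1/12)·(−((4m+1)/m)·(1/(4m+1)² − 1/2) − m/(4m+1) + 3 + 12·𝐬(m,4m+1)) = (2m² − 18m + 1)/(24m)`. -/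
theorem stmt_4 (m : ℤ) (hm : 1 ≤ m) :
    -(1 / 12) * (-((4 * (m : ℝ) + 1) / (m : ℝ)) * (1 / (4 * (m : ℝ) + 1) ^ 2 - 1 / 2)
        - (m : ℝ) / (4 * (m : ℝ) + 1) + 3 + 12 * dedekindSum m (4 * m + 1)) =
      (2 * (m : ℝ) ^ 2 - 18 * (m : ℝ) + 1) / (24 * (m : ℝ)) := by
  lift m to ℕ using (by omega) with M
  rw [ded_eq M]
  have h1 : (1 : ℝ) ≤ (M : ℝ) := by exact_mod_cast hm
  have h2 : (M : ℝ) ≠ 0 := by linarith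
  have h3 : (4 * (M : ℝ) + 1) ≠ 0 := by positivity
  push_cast
  field_simp
  ring
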